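/- Every interlaced doubly arithmetic orbit of integers is generated by a sequence of the form S = IAP((a_0,a_1,a_2),(d, -2d-3Σ, d+3Σ)) with Σ = a_0+a_1+a_2, for some integers a_0, a_1, a_2, d. Conversely, every such S generates a (6,3)-interlaced doubly arithmetic orbit, so the space of interlaced doubly arithmetic integer orbits is exactly this 4-parameter family. -/

import Mathlib

set_option synthInstance.maxHeartbeats 1000000
set_option maxHeartbeats 1000000

def IAP3 {G : Type*} [AddCommGroup G] (a0 a1 a2 d0 d1 d2 : G) : ℤ → G :=
  fun j => if j % 3 = 0 then a0 + (j / 3) • d0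
    else if j % 3 = 1 then a1 + (j / 3) • d1
    else a2 + (j / 3) • d2

def orbit {G : Type*} [AddCommGroup G] (S : ℤ → G) : ℕ → ℤ → G
  | 0 => S
  | i+1 => fun j => orbit S i j + orbit S i (j+1)

def IsIDAO (S : ℤ → ℤ) : Prop :=
  ∃ k1 k2 : ℕ, 0 < k1 ∧ 0 < k2 ∧ ∀ i0 < k1, ∀ j0 < k2, ∀ (i : ℕ) (j : ℤ),
    orbit S (i0 + i * k1) ((j0 : ℤ) + j * k2) =
      orbit S i0 (j0 : ℤ)
        + (i : ℤ) * (orbit S (i0 + k1) (j0 : ℤ) - orbit S i0 (j0 : ℤ))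
        + j * (orbit S i0 ((j0 : ℤ) + k2) - orbit S i0 (j0 : ℤ))

def Trec (g : ℤ → ℤ) : Prop :=
  ∀ y : ℤ, g y + 2 * g (y+1) + 3 * g (y+2) + 2 * g (y+3) + g (y+4) = 0


lemma orbit_succ {G : Type*} [AddCommGroup G] (S : ℤ → G) (n : ℕ) (j : ℤ) :
    orbit S (n+1) j = orbit S n j + orbit S n (j+1) := rfl

lemma orbit_zero {G : Type*} [AddCommGroup G] (S : ℤ → G) : orbit S 0 = S := rfl

lemma orbit_orbit {G : Type*} [AddCommGroup G] (S : ℤ → G) (m n : ℕ) :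
    orbit (orbit S m) n = orbit S (n + m) := by
  induction n with
  | zero => rw [Nat.zero_add]; rfl
  | succ n ih => funext j; rw [orbit_succ, ih, Nat.succ_add, orbit_succ]

lemma orbit6 (g : ℤ → ℤ) (x : ℤ) :
    orbit g 6 x = g x + 6 * g (x+1) + 15 * g (x+2) + 20 * g (x+3) + 15 * g (x+4)
      + 6 * g (x+5) + g (x+6) := by
  show orbit g (5+1) x = _
  simp only [orbit_succ, orbit_zero]
  ring_nf

lemma Trec_rows {S : ℤ → ℤ} (hT : Trec S) : ∀ n, Trec (orbit S n) := by
  intro n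
  induction n with
  | zero => exact hT
  | succ n ih =>
      intro y
      simp only [orbit_succ]
      have h1 := ih y
      have h2 := ih (y+1)
      ring_nf at h1 h2 ⊢
      linarith

lemma Trec_per3 {g : ℤ → ℤ} (hT : Trec g) : ∀ x, g (x+6) - 2 * g (x+3) + g x = 0 := by
  intro x
  have h0 := hT x
  have h1 := hT (x+1)
  have h2 := hT (x+2)
  ring_nf at h0 h1 h2 ⊢
  linarith

lemma nu_per {g : ℤ → ℤ} (hT : Trec g) (x : ℤ) :
    ∀ j : ℤ, g (x + 3*j + 3) - g (x + 3*j) = g (x+3) - g x := by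
  have hK := Trec_per3 hT
  intro j
  induction j using Int.induction_on with
  | zero => norm_num
  | succ i ih =>
      have := hK (x + 3*i)
      ring_nf at this ih ⊢
      linarith
  | pred i ih =>
      have := hK (x + 3*(-(i:ℤ)) - 3)
      ring_nf at this ih ⊢
      linarith

lemma jaffine {g : ℤ → ℤ} (hT : Trec g) (x : ℤ) :
    ∀ j : ℤ, g (x + 3*j) = g x + j * (g (x+3) - g x) := by
  intro j
  induction j using Int.induction_on with
  | zero => norm_num
  | succ i ih =>
      have := nu_per hT x i
      ring_nf at this ih ⊢
      linarith
  | pred i ih =>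
      have := nu_per hT x (-(i:ℤ)-1)
      ring_nf at this ih ⊢
      linarith

lemma per3_ext {h : ℤ → ℤ} (hp : ∀ y, h (y+3) = h y) (x : ℤ) : ∀ j : ℤ, h (x + 3*j) = h x := by
  intro j
  induction j using Int.induction_on with
  | zero => norm_num
  | succ i ih =>
      have := hp (x + 3*i)
      ring_nf at this ih ⊢
      linarith
  | pred i ih =>
      have := hp (x + 3*(-(i:ℤ)) - 3)
      ring_nf at this ih ⊢
      linarith

lemma K2p {S : ℤ → ℤ} (hT : Trec S) (n : ℕ) (x : ℤ) :
    orbit S (n+6) (x+3) - orbit S (n+6) x = orbit S n (x+3) - orbit S n x := by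
  have hg := Trec_rows hT n
  have e : orbit S (n+6) = orbit (orbit S n) 6 := by rw [orbit_orbit, Nat.add_comm]
  rw [e, orbit6, orbit6]
  have h0 := hg x
  have h1 := hg (x+1)
  have h2 := hg (x+2)
  have h3 := hg (x+3)
  have h4 := hg (x+4)
  have h5 := hg (x+5)
  ring_nf at h0 h1 h2 h3 h4 h5 ⊢
  linarith

lemma K3p {S : ℤ → ℤ} (hT : Trec S) (n : ℕ) (x : ℤ) :
    orbit S (n+12) x - 2 * orbit S (n+6) x + orbit S n x = 0 := by
  have hg := Trec_rows hT n
  have e1 : orbit S (n+6) = orbit (orbit S n) 6 := by rw [orbit_orbit, Nat.add_comm]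
  have e2 : orbit S (n+12) = orbit (orbit (orbit S n) 6) 6 := by
    rw [orbit_orbit, orbit_orbit, show 6+6+n = n+12 from by omega]
  rw [e1, e2, orbit6 (orbit (orbit S n) 6) x]
  simp only [orbit6 (orbit S n)]
  have h0 := hg x
  have h1 := hg (x+1)
  have h2 := hg (x+2)
  have h3 := hg (x+3)
  have h4 := hg (x+4)
  have h5 := hg (x+5)
  have h6 := hg (x+6)
  have h7 := hg (x+7)
  have h8 := hg (x+8)
  ring_nf at h0 h1 h2 h3 h4 h5 h6 h7 h8 ⊢
  linarith

lemma D_shift6 {S : ℤ → ℤ} (hT : Trec S) (m : ℕ) (x : ℤ) :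
    ∀ i : ℕ, orbit S (m + i*6 + 6) x - orbit S (m + i*6) x = orbit S (m+6) x - orbit S m x := by
  intro i
  induction i with
  | zero => norm_num
  | succ i ih =>
      have h := K3p hT (m + i*6) x
      have e1 : m + (i+1)*6 + 6 = (m + i*6) + 12 := by omega
      have e2 : m + (i+1)*6 = (m + i*6) + 6 := by omega
      rw [e1, e2]
      linarith

theorem backward_main {S : ℤ → ℤ} (hT : Trec S) : IsIDAO S := by
  refine ⟨6, 3, by norm_num, by norm_num, ?_⟩
  intro i0 _ j0 _ i j
  induction i with
  | zero =>
      have hj := jaffine (Trec_rows hT i0) (j0 : ℤ) j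
      push_cast
      ring_nf at hj ⊢
      linarith
  | succ i ih =>
      have e1 : i0 + (i+1)*6 = (i0 + i*6) + 6 := by omega
      rw [e1]
      have hD : ∀ y, orbit S ((i0 + i*6) + 6) y - orbit S (i0 + i*6) y
          = orbit S (i0+6) y - orbit S i0 y := by
        intro y
        have := D_shift6 hT i0 y i
        linarith
      have hper : ∀ y, (fun z => orbit S (i0+6) z - orbit S i0 z) (y+3)
          = (fun z => orbit S (i0+6) z - orbit S i0 z) y := by
        intro y
        have := K2p hT i0 y
        linarith
      have hext := per3_ext (h := fun z => orbit S (i0+6) z - orbit S i0 z) hper (j0 : ℤ) j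
      have hstep := hD ((j0:ℤ) + 3*j)
      push_cast at ih ⊢
      ring_nf at hext hstep ih ⊢
      linarith


lemma IAP3_eval0 (a0 a1 a2 d0 d1 d2 : ℤ) (j q : ℤ) (h : j % 3 = 0) (hq : j / 3 = q) :
    IAP3 a0 a1 a2 d0 d1 d2 j = a0 + q * d0 := by
  simp [IAP3, h, hq]

lemma IAP3_eval1 (a0 a1 a2 d0 d1 d2 : ℤ) (j q : ℤ) (h : j % 3 = 1) (hq : j / 3 = q) :
    IAP3 a0 a1 a2 d0 d1 d2 j = a1 + q * d1 := by
  have h0 : ¬ (j % 3 = 0) := by omega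
  simp [IAP3, h, h0, hq]

lemma IAP3_eval2 (a0 a1 a2 d0 d1 d2 : ℤ) (j q : ℤ) (h : j % 3 = 2) (hq : j / 3 = q) :
    IAP3 a0 a1 a2 d0 d1 d2 j = a2 + q * d2 := by
  have h0 : ¬ (j % 3 = 0) := by omega
  have h1 : ¬ (j % 3 = 1) := by omega
  simp [IAP3, h0, h1, hq]

lemma Trec_IAP3 (a0 a1 a2 d : ℤ) :
    Trec (IAP3 a0 a1 a2 d (-(2*d) - 3*(a0+a1+a2)) (d + 3*(a0+a1+a2))) := by
  intro j
  rcases (show j % 3 = 0 ∨ j % 3 = 1 ∨ j % 3 = 2 by omega) with h | h | h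
  · rw [IAP3_eval0 _ _ _ _ _ _ j (j/3) h rfl,
        IAP3_eval1 _ _ _ _ _ _ (j+1) (j/3) (by omega) (by omega),
        IAP3_eval2 _ _ _ _ _ _ (j+2) (j/3) (by omega) (by omega),
        IAP3_eval0 _ _ _ _ _ _ (j+3) (j/3+1) (by omega) (by omega),
        IAP3_eval1 _ _ _ _ _ _ (j+4) (j/3+1) (by omega) (by omega)]
    ring
  · rw [IAP3_eval1 _ _ _ _ _ _ j (j/3) h rfl,
        IAP3_eval2 _ _ _ _ _ _ (j+1) (j/3) (by omega) (by omega),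
        IAP3_eval0 _ _ _ _ _ _ (j+2) (j/3+1) (by omega) (by omega),
        IAP3_eval1 _ _ _ _ _ _ (j+3) (j/3+1) (by omega) (by omega),
        IAP3_eval2 _ _ _ _ _ _ (j+4) (j/3+1) (by omega) (by omega)]
    ring
  · rw [IAP3_eval2 _ _ _ _ _ _ j (j/3) h rfl,
        IAP3_eval0 _ _ _ _ _ _ (j+1) (j/3+1) (by omega) (by omega),
        IAP3_eval1 _ _ _ _ _ _ (j+2) (j/3+1) (by omega) (by omega),
        IAP3_eval2 _ _ _ _ _ _ (j+3) (j/3+1) (by omega) (by omega),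
        IAP3_eval0 _ _ _ _ _ _ (j+4) (j/3+2) (by omega) (by omega)]
    ring

lemma Trec_ext {f g : ℤ → ℤ} (hf : Trec f) (hg : Trec g) (h0 : f 0 = g 0)
    (h1 : f 1 = g 1) (h2 : f 2 = g 2) (h3 : f 3 = g 3) : f = g := by
  have up : ∀ n : ℕ, f n = g n ∧ f (n+1) = g (n+1) ∧ f (n+2) = g (n+2) ∧ f (n+3) = g (n+3) := by
    intro n
    induction n with
    | zero => exact ⟨by exact_mod_cast h0, by norm_num [h1], by norm_num [h2], by norm_num [h3]⟩
    | succ n ih =>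
        obtain ⟨p0, p1, p2, p3⟩ := ih
        have hfn := hf (n : ℤ)
        have hgn := hg (n : ℤ)
        push_cast
        refine ⟨?_, ?_, ?_, ?_⟩ <;> (ring_nf (config := { ifUnchanged := .silent }) at p0 p1 p2 p3 hfn hgn ⊢; linarith)
  have down : ∀ n : ℕ, f (-(n:ℤ)) = g (-(n:ℤ)) ∧ f (-(n:ℤ)+1) = g (-(n:ℤ)+1)
      ∧ f (-(n:ℤ)+2) = g (-(n:ℤ)+2) ∧ f (-(n:ℤ)+3) = g (-(n:ℤ)+3) := by
    intro n
    induction n with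
    | zero => exact ⟨by exact_mod_cast h0, by norm_num [h1], by norm_num [h2], by norm_num [h3]⟩
    | succ n ih =>
        obtain ⟨p0, p1, p2, p3⟩ := ih
        have hfn := hf (-(n:ℤ)-1)
        have hgn := hg (-(n:ℤ)-1)
        push_cast
        refine ⟨?_, ?_, ?_, ?_⟩ <;> (ring_nf (config := { ifUnchanged := .silent }) at p0 p1 p2 p3 hfn hgn ⊢; linarith)
  funext j
  rcases le_or_gt 0 j with hj | hj
  · lift j to ℕ using hj
    exact (up j).1
  · have hj' : j = -(((-j).toNat : ℤ)) := by omega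
    rw [hj']
    exact (down (-j).toNat).1


lemma orbit_cast (S : ℤ → ℤ) (n : ℕ) :
    orbit (fun j => ((S j : ℚ))) n = fun j => ((orbit S n j : ℤ) : ℚ) := by
  induction n with
  | zero => rfl
  | succ n ih => funext j; rw [orbit_succ, orbit_succ, ih]; push_cast; ring

noncomputable def shftQ : Module.End ℚ (ℤ → ℚ) where
  toFun := fun g j => g (j+1)
  map_add' := fun f g => rfl
  map_smul' := fun c f => rfl

lemma shftQ_apply (g : ℤ → ℚ) (j : ℤ) : shftQ g j = g (j+1) := rfl

lemma shftQ_pow (n : ℕ) (g : ℤ → ℚ) (j : ℤ) : ((shftQ ^ n) g) j = g (j + n) := by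
  induction n generalizing g j with
  | zero => simp
  | succ n ih =>
      rw [pow_succ, Module.End.mul_apply, ih, shftQ_apply]
      push_cast
      ring_nf

lemma one_add_shftQ_pow (n : ℕ) (g : ℤ → ℚ) : ((1 + shftQ) ^ n) g = orbit g n := by
  induction n generalizing g with
  | zero => simp; rfl
  | succ n ih =>
      funext j
      rw [pow_succ', Module.End.mul_apply, ih, orbit_succ]
      simp [LinearMap.add_apply, Module.End.one_apply, shftQ_apply]

open Polynomial

lemma root_arg (k1 k2 : ℕ) (hk1 : 0 < k1) (hk2 : 0 < k2) (α : ℂ)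
    (hα : α ^ k2 = 1) (hβ : (1 + α) ^ k1 = 1) : α^2 + α + 1 = 0 := by
  have habs : ‖α‖ = 1 := by
    have h1 : ‖α‖ ^ k2 = 1 := by rw [← norm_pow, hα, norm_one]
    have h0 : (0:ℝ) ≤ ‖α‖ := norm_nonneg α
    rcases lt_trichotomy (‖α‖) 1 with h | h | h
    · exact absurd h1 (by have := pow_lt_one₀ h0 h hk2.ne'; linarith)
    · exact h
    · exact absurd h1 (by have := one_lt_pow₀ h hk2.ne'; linarith)
  have habs' : ‖1 + α‖ = 1 := by
    have h1 : ‖1+α‖ ^ k1 = 1 := by rw [← norm_pow, hβ, norm_one]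
    have h0 : (0:ℝ) ≤ ‖1+α‖ := norm_nonneg _
    rcases lt_trichotomy (‖1+α‖) 1 with h | h | h
    · exact absurd h1 (by have := pow_lt_one₀ h0 h hk1.ne'; linarith)
    · exact h
    · exact absurd h1 (by have := one_lt_pow₀ h hk1.ne'; linarith)
  have h1 : α * (starRingEnd ℂ) α = 1 := by
    rw [Complex.mul_conj]; norm_cast
    rw [Complex.normSq_eq_norm_sq, habs]; norm_num
  have h2 : (1 + α) * ((1:ℂ) + (starRingEnd ℂ) α) = 1 := by
    have e : ((1:ℂ) + (starRingEnd ℂ) α) = (starRingEnd ℂ) (1 + α) := by simp [map_add]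
    rw [e, Complex.mul_conj]; norm_cast
    rw [Complex.normSq_eq_norm_sq, habs']; norm_num
  have hc : (starRingEnd ℂ) α = -1 - α := by linear_combination h2 - h1
  linear_combination α * hc - h1

lemma irred_dvd_sigma (k1 k2 : ℕ) (hk1 : 0 < k1) (hk2 : 0 < k2) (p : ℚ[X])
    (hp : Irreducible p) (hpA : p ∣ X ^ k2 - 1) (hpB : p ∣ (1 + X) ^ k1 - 1) :
    p ∣ 1 + X + X ^ 2 := by
  -- get a complex root of p
  have hdeg : 0 < (p.map (algebraMap ℚ ℂ)).degree := by
    rw [degree_map]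
    exact degree_pos_of_irreducible hp
  obtain ⟨α, hroot⟩ := Complex.exists_root hdeg
  have haev : aeval α p = 0 := by
    rwa [aeval_def, ← eval_map]
  have hα : α ^ k2 = 1 := by
    obtain ⟨q, hq⟩ := hpA
    have := congrArg (aeval α) hq
    simp [haev] at this
    linear_combination this
  have hβ : (1 + α) ^ k1 = 1 := by
    obtain ⟨q, hq⟩ := hpB
    have := congrArg (aeval α) hq
    simp [haev] at this
    linear_combination this
  have hσα : aeval α ((1:ℚ[X]) + X + X ^ 2) = 0 := by
    have := root_arg k1 k2 hk1 hk2 α hα hβ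
    simp only [map_add, map_one, aeval_X, map_pow]
    linear_combination this
  by_contra hnd
  obtain ⟨u, v, huv⟩ := (hp.coprime_iff_not_dvd).mpr hnd
  have := congrArg (aeval α) huv
  simp [haev, hσα] at this

lemma bezout_sigma (k1 k2 : ℕ) (hk1 : 0 < k1) (hk2 : 0 < k2) :
    ∃ P Q R : ℚ[X], ((1:ℚ[X]) + X + X ^ 2) ^ 2
      = P * ((X ^ k2 - 1) * (X ^ k2 - 1))
        + Q * ((X ^ k2 - 1) * ((1 + X) ^ k1 - 1))
        + R * (((1 + X) ^ k1 - 1) * ((1 + X) ^ k1 - 1)) := by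
  set A : ℚ[X] := X ^ k2 - 1 with hA
  set B : ℚ[X] := (1 + X) ^ k1 - 1 with hB
  have hA0 : A ≠ 0 := by
    have := X_pow_sub_C_ne_zero hk2 (1:ℚ)
    simpa [hA] using this
  have hAsf : Squarefree A := by
    have hsep : (X ^ k2 - C (1:ℚ)).Separable :=
      separable_X_pow_sub_C (1:ℚ) (by exact_mod_cast hk2.ne') one_ne_zero
    have : Separable A := by simpa [hA] using hsep
    exact this.squarefree
  set σ : ℚ[X] := 1 + X + X ^ 2 with hσ
  set d : ℚ[X] := EuclideanDomain.gcd A B with hd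
  have hdvd : d ∣ σ := by
    set e : ℚ[X] := EuclideanDomain.gcd d σ with he
    obtain ⟨d', hd'⟩ : e ∣ d := EuclideanDomain.gcd_dvd_left d σ
    have hunit : IsUnit d' := by
      by_contra hnu
      have hdne : d ≠ 0 := by
        intro h
        rw [hd, EuclideanDomain.gcd_eq_zero_iff] at h
        exact hA0 h.1
      have hd'ne : d' ≠ 0 := fun h => hdne (by rw [hd', h, mul_zero])
      obtain ⟨p, hpirr, hpd'⟩ := WfDvdMonoid.exists_irreducible_factor hnu hd'ne
      have hpd : p ∣ d := hd' ▸ Dvd.dvd.mul_left hpd' e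
      have hpA : p ∣ A := hpd.trans (EuclideanDomain.gcd_dvd_left A B)
      have hpB : p ∣ B := hpd.trans (EuclideanDomain.gcd_dvd_right A B)
      have hpσ : p ∣ σ := irred_dvd_sigma k1 k2 hk1 hk2 p hpirr hpA hpB
      have hpe : p ∣ e := EuclideanDomain.dvd_gcd hpd hpσ
      have hsq : p * p ∣ A := by
        have : p * p ∣ e * d' := mul_dvd_mul hpe hpd'
        rw [← hd'] at this
        exact this.trans (EuclideanDomain.gcd_dvd_left A B)
      exact hpirr.not_isUnit (hAsf p hsq)
    obtain ⟨t, ht⟩ := hunit.exists_right_inv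
    have : d ∣ e := ⟨t, by rw [hd', mul_assoc, ht, mul_one]⟩
    exact this.trans (EuclideanDomain.gcd_dvd_right d σ)
  obtain ⟨c, hc⟩ := hdvd
  have hbez : d = A * EuclideanDomain.gcdA A B + B * EuclideanDomain.gcdB A B :=
    EuclideanDomain.gcd_eq_gcd_ab A B
  refine ⟨EuclideanDomain.gcdA A B * EuclideanDomain.gcdA A B * c * c,
      2 * EuclideanDomain.gcdA A B * EuclideanDomain.gcdB A B * c * c,
      EuclideanDomain.gcdB A B * EuclideanDomain.gcdB A B * c * c, ?_⟩
  calc σ ^ 2 = (d * c) ^ 2 := by rw [← hc]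
  _ = _ := by rw [hbez]; ring

lemma forward_Trec {S : ℤ → ℤ} (h : IsIDAO S) : Trec S := by
  obtain ⟨k1, k2, hk1, hk2, hP⟩ := h
  have setup : ∀ x : ℤ, ∃ j0 : ℕ, ∃ q : ℤ, j0 < k2 ∧ (j0:ℤ) + q * k2 = x := by
    intro x
    have h1 : 0 ≤ x % (k2:ℤ) := Int.emod_nonneg x (by exact_mod_cast hk2.ne')
    have h2 : x % (k2:ℤ) < k2 := Int.emod_lt_of_pos x (by exact_mod_cast hk2)
    refine ⟨(x % k2).toNat, x / k2, by omega, ?_⟩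
    rw [Int.toNat_of_nonneg h1]
    rw [mul_comm]; exact Int.emod_add_mul_ediv x k2
  have ha : ∀ x : ℤ, S (x + k2 + k2) - 2 * S (x + k2) + S x = 0 := by
    intro x
    obtain ⟨j0, q, hj0, hx⟩ := setup x
    have E0 := hP 0 hk1 j0 hj0 0 q
    have E1 := hP 0 hk1 j0 hj0 0 (q+1)
    have E2 := hP 0 hk1 j0 hj0 0 (q+2)
    rw [show (j0:ℤ) + q * k2 = x from hx] at E0
    rw [show (j0:ℤ) + (q+1) * k2 = x + k2 from by rw [← hx]; ring] at E1
    rw [show (j0:ℤ) + (q+2) * k2 = x + k2 + k2 from by rw [← hx]; ring] at E2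
    norm_num [orbit_zero] at E0 E1 E2
    linarith
  have hb : ∀ x : ℤ, orbit S k1 (x + k2) - orbit S k1 x - S (x + k2) + S x = 0 := by
    intro x
    obtain ⟨j0, q, hj0, hx⟩ := setup x
    have E00 := hP 0 hk1 j0 hj0 0 q
    have E01 := hP 0 hk1 j0 hj0 0 (q+1)
    have E10 := hP 0 hk1 j0 hj0 1 q
    have E11 := hP 0 hk1 j0 hj0 1 (q+1)
    rw [show (j0:ℤ) + q * k2 = x from hx] at E00 E10
    rw [show (j0:ℤ) + (q+1) * k2 = x + k2 from by rw [← hx]; ring] at E01 E11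
    norm_num [orbit_zero] at E00 E01 E10 E11
    linarith
  have hc : ∀ x : ℤ, orbit S (k1 + k1) x - 2 * orbit S k1 x + S x = 0 := by
    intro x
    obtain ⟨j0, q, hj0, hx⟩ := setup x
    have E0 := hP 0 hk1 j0 hj0 0 q
    have E1 := hP 0 hk1 j0 hj0 1 q
    have E2 := hP 0 hk1 j0 hj0 2 q
    rw [show (j0:ℤ) + q * k2 = x from hx] at E0 E1 E2
    rw [show 0 + 2 * k1 = k1 + k1 from by omega] at E2
    norm_num [orbit_zero] at E0 E1 E2
    linarith
  set Sq : ℤ → ℚ := fun j => ((S j : ℤ) : ℚ) with hSq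
  have haQ : ∀ x : ℤ, Sq (x + k2 + k2) - 2 * Sq (x + k2) + Sq x = 0 := by
    intro x; have := ha x; simp only [hSq]; exact_mod_cast this
  have hbQ : ∀ x : ℤ, orbit Sq k1 (x + k2) - orbit Sq k1 x - Sq (x + k2) + Sq x = 0 := by
    intro x; have := hb x
    simp only [hSq, orbit_cast]; exact_mod_cast this
  have hcQ : ∀ x : ℤ, orbit Sq (k1 + k1) x - 2 * orbit Sq k1 x + Sq x = 0 := by
    intro x; have := hc x
    simp only [hSq, orbit_cast]; exact_mod_cast this
  have hAe : aeval shftQ ((X:ℚ[X])^k2 - 1) = shftQ^k2 - 1 := by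
    rw [map_sub, map_pow, aeval_X, map_one]
  have hBe : aeval shftQ (((1:ℚ[X]) + X)^k1 - 1) = (1 + shftQ)^k1 - 1 := by
    rw [map_sub, map_pow, map_add, aeval_X, map_one]
  have HAA : aeval shftQ ((X:ℚ[X])^k2 - 1) (aeval shftQ ((X:ℚ[X])^k2 - 1) Sq) = 0 := by
    rw [hAe]; funext y
    simp only [LinearMap.sub_apply, Module.End.one_apply, map_sub, Pi.sub_apply,
      shftQ_pow, Pi.zero_apply]
    have := haQ y; linarith
  have HAB : aeval shftQ ((X:ℚ[X])^k2 - 1) (aeval shftQ (((1:ℚ[X]) + X)^k1 - 1) Sq) = 0 := by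
    rw [hAe, hBe]; funext y
    simp only [LinearMap.sub_apply, Module.End.one_apply, map_sub, Pi.sub_apply,
      shftQ_pow, one_add_shftQ_pow, Pi.zero_apply]
    have := hbQ y; linarith
  have HBB : aeval shftQ (((1:ℚ[X]) + X)^k1 - 1)
      (aeval shftQ (((1:ℚ[X]) + X)^k1 - 1) Sq) = 0 := by
    rw [hBe]; funext y
    simp only [LinearMap.sub_apply, Module.End.one_apply, map_sub, Pi.sub_apply,
      one_add_shftQ_pow, orbit_orbit, Pi.zero_apply]
    have := hcQ y; linarith
  obtain ⟨P, Q, R, hPQR⟩ := bezout_sigma k1 k2 hk1 hk2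
  have hfinal : aeval shftQ (((1:ℚ[X]) + X + X^2)^2) Sq = 0 := by
    rw [hPQR]
    simp only [map_add, map_mul, LinearMap.add_apply, Module.End.mul_apply]
    rw [HAA, HAB, HBB]
    simp
  intro y
  have hexp : aeval shftQ (((1:ℚ[X]) + X + X^2)^2) = (1 + shftQ + shftQ^2)^2 := by
    rw [map_pow, map_add, map_add, map_one, map_pow, aeval_X]
  rw [hexp] at hfinal
  have hy := congrFun hfinal y
  rw [pow_two, Module.End.mul_apply] at hy
  simp only [LinearMap.add_apply, Module.End.one_apply, shftQ_apply, shftQ_pow,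
    Pi.add_apply, Pi.zero_apply] at hy
  have : ((S y + 2 * S (y+1) + 3 * S (y+2) + 2 * S (y+3) + S (y+4) : ℤ) : ℚ) = 0 := by
    push_cast
    simp only [hSq] at hy
    push_cast at hy
    ring_nf at hy ⊢
    linarith
  exact_mod_cast this

theorem stmt19 (S : ℤ → ℤ) :
    IsIDAO S ↔ ∃ a0 a1 a2 d : ℤ,
      S = IAP3 a0 a1 a2 d (-(2 * d) - 3 * (a0 + a1 + a2)) (d + 3 * (a0 + a1 + a2)) := by
  constructor
  · intro h
    have hT := forward_Trec h
    refine ⟨S 0, S 1, S 2, S 3 - S 0, ?_⟩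
    apply Trec_ext hT (Trec_IAP3 _ _ _ _)
    · rw [IAP3_eval0 _ _ _ _ _ _ 0 0 (by norm_num) (by norm_num)]; ring
    · rw [IAP3_eval1 _ _ _ _ _ _ 1 0 (by norm_num) (by norm_num)]; ring
    · rw [IAP3_eval2 _ _ _ _ _ _ 2 0 (by norm_num) (by norm_num)]; ring
    · rw [IAP3_eval0 _ _ _ _ _ _ 3 1 (by norm_num) (by norm_num)]; ring
  · rintro ⟨a0, a1, a2, d, rfl⟩
    exact backward_main (Trec_IAP3 a0 a1 a2 d)
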